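/- Let a > 1 be real, δ := a − √(a² − 1), η := −δ, and for m ≥ 1 let Q_m(t) := −2/(η − η⁻¹) + (4/(η − η⁻¹)) Σ_{j=0}^{m−1} ηʲ T_j(t) − (4 η^{m−1}/(η − η⁻¹)²) T_m(t), and R_{m+1}(t) := η⁻¹ T_{m+1}(t) − 2 T_m(t) + η T_{m−1}(t), where T_j is the Chebyshev polynomial of the first kind of degree j. Then the polynomial identity (t + a) · Q_m(t) = 1 − (2 ηᵐ/(η − η⁻¹)²) · R_{m+1}(t) holds for all t. -/

import Mathlib

open Polynomial Polynomial.Chebyshev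

lemma tele_aux (η : ℝ) (hη0 : η ≠ 0) (k : ℕ) :
    (2 * X - C (η + η⁻¹)) * ∑ j ∈ Finset.range (k + 1), C (η ^ j) * T ℝ j
      = C (η ^ k) * T ℝ ((k : ℤ) + 1) - C (η ^ (k + 1)) * T ℝ (k : ℤ) - C η⁻¹ + X := by
  have hU : C η * C η⁻¹ = (1 : Polynomial ℝ) := by
    rw [← Polynomial.C_mul, mul_inv_cancel₀ hη0, Polynomial.C_1]
  induction k with
  | zero =>
      simp only [Finset.sum_range_one, pow_zero, map_one, one_mul, Nat.cast_zero, zero_add,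
        T_zero, T_one, pow_one, C_add, mul_one]
      ring
  | succ k ih =>
      rw [Finset.sum_range_succ, mul_add, ih]
      push_cast
      rw [show ((k : ℤ) + 1 + 1) = (k : ℤ) + 2 from by ring,
        Polynomial.Chebyshev.T_add_two ℝ (k : ℤ)]
      simp only [C_pow, C_add]
      linear_combination (-(C η ^ k * T ℝ ((k : ℤ) + 1))) * hU

theorem best_approx_closed_form (a : ℝ) (ha : 1 < a)
    (δ η : ℝ) (hδ : δ = a - Real.sqrt (a ^ 2 - 1)) (hη : η = -δ)
    (m : ℕ) (hm : 1 ≤ m)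
    (Qm Rm1 : Polynomial ℝ)
    (hQm : Qm = C (-2 / (η - η⁻¹)) +
        C (4 / (η - η⁻¹)) * ∑ j ∈ Finset.range m, C (η ^ j) * T ℝ j -
        C (4 * η ^ (m - 1) / (η - η⁻¹) ^ 2) * T ℝ m)
    (hRm1 : Rm1 = C η⁻¹ * T ℝ ((m : ℤ) + 1) - 2 * T ℝ (m : ℤ) +
        C η * T ℝ ((m : ℤ) - 1)) :
    (X + C a) * Qm = 1 - C (2 * η ^ m / (η - η⁻¹) ^ 2) * Rm1 := by
  -- basic real-number facts
  have hs2 : Real.sqrt (a ^ 2 - 1) ^ 2 = a ^ 2 - 1 := Real.sq_sqrt (by nlinarith)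
  have hspos : 0 < Real.sqrt (a ^ 2 - 1) := Real.sqrt_pos.mpr (by nlinarith)
  have hδpos : 0 < δ := by rw [hδ]; nlinarith
  have hδne : δ ≠ 0 := ne_of_gt hδpos
  have hδinv : δ⁻¹ = a + Real.sqrt (a ^ 2 - 1) := by
    refine inv_eq_of_mul_eq_one_right ?_
    rw [hδ]; linear_combination -hs2
  have hη0 : η ≠ 0 := by rw [hη]; exact neg_ne_zero.mpr hδne
  have hsum : η + η⁻¹ = -(2 * a) := by
    rw [hη, inv_neg, hδinv, hδ]; ring
  have hdne : η - η⁻¹ ≠ 0 := by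
    rw [hη, inv_neg, hδinv, hδ]
    intro h; nlinarith
  -- polynomial-level facts
  have hU : C η * C η⁻¹ = (1 : Polynomial ℝ) := by
    rw [← Polynomial.C_mul, mul_inv_cancel₀ hη0, Polynomial.C_1]
  have hV : (C η - C η⁻¹) * C (η - η⁻¹)⁻¹ = (1 : Polynomial ℝ) := by
    rw [← Polynomial.C_sub, ← Polynomial.C_mul, mul_inv_cancel₀ hdne, Polynomial.C_1]
  have hC : 2 * C a = -(C η + C η⁻¹) := by
    rw [← Polynomial.C_add, hsum, Polynomial.C_neg, Polynomial.C_mul, map_ofNat]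
    ring
  obtain ⟨k, rfl⟩ : ∃ k, m = k + 1 := ⟨m - 1, by omega⟩
  subst hQm hRm1
  have hS := tele_aux η hη0 k
  simp only [C_pow, C_add] at hS
  simp only [Nat.add_sub_cancel]
  push_cast
  rw [show ((k : ℤ) + 1 + 1) = (k : ℤ) + 2 from by ring,
    show ((k : ℤ) + 1 - 1) = (k : ℤ) from by ring,
    Polynomial.Chebyshev.T_add_two ℝ (k : ℤ)]
  simp only [div_eq_mul_inv, ← inv_pow, Polynomial.C_mul, Polynomial.C_pow, Polynomial.C_neg, map_ofNat, Polynomial.C_add]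
  set E := C η with hE
  set U := C η⁻¹ with hUdef
  set V := C (η - η⁻¹)⁻¹ with hVdef
  set A := T ℝ ((k : ℤ) + 1) with hA
  set B := T ℝ (k : ℤ) with hB
  set S := ∑ j ∈ Finset.range (k + 1), C η ^ j * T ℝ (j : ℤ) with hSdef
  linear_combination (-V + 2 * V * S - 2 * E ^ k * V ^ 2 * A) * hC + 2 * V * hS +
    4 * E ^ k * V ^ 2 * X * A * hU + (1 - 2 * E ^ k * V * A + 2 * E ^ k * V * E * B) * hV
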